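/- Let q ∈ ℂ with qⁿ ≠ 1 for all n ≥ 1, and let ψₙ = (qⁿ − 1)/(q − 1). Then for all 0 ≤ k ≤ n and all m ≥ l ≥ 0, the binomial-operator kernel satisfies C(n,k)(m,l) = q^{kl} · binomψ(n,k), where binomψ(n,k) is the Gaussian q-binomial coefficient; equivalently, the binomial operator ⟨n k⟩∗ applied to (f, g) equals binomψ(n,k)·f(q^k x)·g(x). -/

import Mathlib

open Finset

/-- The ψ-factorial: ψₙ! = ψ₁ψ₂⋯ψₙ, with ψ₀! = 1. -/
noncomputable def psiFact (ψ : ℕ → ℂ) : ℕ → ℂ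
  | 0 => 1
  | n + 1 => psiFact ψ n * ψ (n + 1)

/-- The ψ-binomial coefficient binomψ(n,k) = ψₙ!/(ψₖ!·ψ_{n−k}!). -/
noncomputable def psiBinom (ψ : ℕ → ℂ) (n k : ℕ) : ℂ :=
  psiFact ψ n / (psiFact ψ k * psiFact ψ (n - k))

/-- The Fontané numbers F(n,k) = (ψₙ − ψₖ)/ψ_{n−k}. -/
noncomputable def Fker (ψ : ℕ → ℂ) (n k : ℕ) : ℂ :=
  (ψ n - ψ k) / ψ (n - k)

/-- The q-integers [n] = (qⁿ − 1)/(q − 1). -/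
noncomputable def qInt (q : ℂ) (n : ℕ) : ℂ := (q ^ n - 1) / (q - 1)

/-- The binomial-operator kernels C(n,k)(m,l) of the binomial operators ⟨n k⟩∗. -/
noncomputable def Cker (ψ : ℕ → ℂ) : ℕ → ℕ → ℕ → ℕ → ℂ
  | _, 0, _, _ => 1
  | 0, _ + 1, _, _ => 0
  | n + 1, k + 1, m, l =>
      if k = n then ∏ i ∈ Finset.range (n + 1), Fker ψ (m + i + 1) l
      else Cker ψ n (k + 1) (m + 1) (l + 1) + Fker ψ (m + 1) l * Cker ψ n k (m + 1) l

section Aux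
variable (q : ℂ)

lemma qInt_ne (hq : ∀ n : ℕ, 1 ≤ n → q ^ n ≠ 1) (n : ℕ) (hn : 1 ≤ n) : qInt q n ≠ 0 := by
  have h1 : q - 1 ≠ 0 := sub_ne_zero.mpr (by simpa using hq 1 le_rfl)
  exact div_ne_zero (sub_ne_zero.mpr (hq n hn)) h1

lemma psiFact_ne (hq : ∀ n : ℕ, 1 ≤ n → q ^ n ≠ 1) (n : ℕ) : psiFact (qInt q) n ≠ 0 := by
  induction n with
  | zero => simp [psiFact]
  | succ n ih => exact mul_ne_zero ih (qInt_ne q hq (n+1) (Nat.succ_le_succ n.zero_le))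

lemma Fker_eq (hq : ∀ n : ℕ, 1 ≤ n → q ^ n ≠ 1) (n l : ℕ) (h : l < n) : Fker (qInt q) n l = q ^ l := by
  have h1 : q - 1 ≠ 0 := sub_ne_zero.mpr (by simpa using hq 1 le_rfl)
  have h2 : q ^ (n - l) - 1 ≠ 0 := sub_ne_zero.mpr (hq (n - l) (by omega))
  have hpow : q ^ n = q ^ l * q ^ (n - l) := by
    rw [← pow_add]; congr 1; omega
  rw [Fker, qInt, qInt, qInt, hpow]
  field_simp
  ring

lemma qInt_add (hq : ∀ n : ℕ, 1 ≤ n → q ^ n ≠ 1) (k j : ℕ) : qInt q (k + j + 2) = q ^ (k+1) * qInt q (j+1) + qInt q (k+1) := by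
  have h1 : q - 1 ≠ 0 := sub_ne_zero.mpr (by simpa using hq 1 le_rfl)
  rw [qInt, qInt, qInt]
  field_simp
  ring

lemma psiBinom_self (hq : ∀ n : ℕ, 1 ≤ n → q ^ n ≠ 1) (n : ℕ) : psiBinom (qInt q) n n = 1 := by
  rw [psiBinom, Nat.sub_self]
  have : psiFact (qInt q) 0 = 1 := rfl
  rw [this, mul_one, div_self (psiFact_ne q hq n)]

lemma psiBinom_zero (hq : ∀ n : ℕ, 1 ≤ n → q ^ n ≠ 1) (n : ℕ) : psiBinom (qInt q) n 0 = 1 := by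
  rw [psiBinom, Nat.sub_zero]
  have : psiFact (qInt q) 0 = 1 := rfl
  rw [this, one_mul, div_self (psiFact_ne q hq n)]

lemma psiBinom_pascal (hq : ∀ n : ℕ, 1 ≤ n → q ^ n ≠ 1) (k j : ℕ) :
    psiBinom (qInt q) (k + j + 2) (k + 1)
      = q ^ (k+1) * psiBinom (qInt q) (k + j + 1) (k + 1)
        + psiBinom (qInt q) (k + j + 1) k := by
  have e1 : k + j + 2 - (k + 1) = j + 1 := by omega
  have e2 : k + j + 1 - (k + 1) = j := by omega
  have e3 : k + j + 1 - k = j + 1 := by omega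
  rw [psiBinom, psiBinom, psiBinom, e1, e2, e3]
  have f1 : psiFact (qInt q) (k + j + 2) = psiFact (qInt q) (k + j + 1) * qInt q (k + j + 2) := rfl
  have f2 : psiFact (qInt q) (j + 1) = psiFact (qInt q) j * qInt q (j + 1) := rfl
  have f3 : psiFact (qInt q) (k + 1) = psiFact (qInt q) k * qInt q (k + 1) := rfl
  rw [f1, f2, f3, qInt_add q hq k j]
  have n1 := psiFact_ne q hq k
  have n2 := psiFact_ne q hq j
  have n3 := psiFact_ne q hq (k + j + 1)
  have n4 := qInt_ne q hq (k+1) (by omega)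
  have n5 := qInt_ne q hq (j+1) (by omega)
  field_simp

end Aux

theorem qInt_Cker (q : ℂ) (hq : ∀ n : ℕ, 1 ≤ n → q ^ n ≠ 1)
    (n k : ℕ) (hkn : k ≤ n) (m l : ℕ) (hlm : l ≤ m) :
    Cker (qInt q) n k m l = q ^ (k * l) * psiBinom (qInt q) n k := by
  induction n generalizing k m l with
  | zero =>
    interval_cases k
    simp [Cker, psiBinom_zero q hq]
  | succ n ih =>
    match k, hkn with
    | 0, _ =>
      have : Cker (qInt q) (n+1) 0 m l = 1 := rfl
      simp [this, psiBinom_zero q hq]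
    | k + 1, hkn =>
      rcases eq_or_lt_of_le (Nat.succ_le_succ_iff.mp hkn) with h | h
      · subst h
        rw [Cker, if_pos rfl, psiBinom_self q hq]
        rw [Finset.prod_congr rfl (fun i _ => Fker_eq q hq (m + i + 1) l (by omega))]
        rw [Finset.prod_const, Finset.card_range, ← pow_mul]
        ring
      · rw [Cker, if_neg (Nat.ne_of_lt h)]
        rw [ih (k+1) h (m+1) (l+1) (by omega), ih k (by omega) (m+1) l (by omega),
          Fker_eq q hq (m+1) l (by omega)]
        obtain ⟨j, rfl⟩ : ∃ j, n = k + j + 1 := ⟨n - k - 1, by omega⟩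
        rw [psiBinom_pascal q hq k j]
        ring
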